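/- Let λ₁(D, f) denote the principal eigenvalue of the Neumann eigenvalue problem -D φ'' + f(x) φ = λ φ on (0, L) with φ'(0) = φ'(L) = 0, where f ∈ C([0,L]). Then λ₁(D, f) → min_{x∈[0,L]} f(x) as D → 0⁺. -/

import Mathlib

open Set intervalIntegral

lemma maxsq_deriv (t : ℝ) : HasDerivAt (fun s : ℝ => (max s 0)^2) (2 * max t 0) t := by
  rcases lt_trichotomy t 0 with h | h | h
  · have he : (fun s : ℝ => (max s 0)^2) =ᶠ[nhds t] (fun _ => (0:ℝ)) := by
      filter_upwards [eventually_lt_nhds h] with s hs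
      simp [max_eq_right hs.le]
    rw [max_eq_right h.le]
    simpa using (hasDerivAt_const t (0:ℝ)).congr_of_eventuallyEq he
  · subst h
    rw [hasDerivAt_iff_tendsto_slope]
    have hb : ∀ᶠ s in nhdsWithin (0:ℝ) {(0:ℝ)}ᶜ, ‖slope (fun s : ℝ => (max s 0)^2) 0 s‖ ≤ |s| := by
      filter_upwards with s
      rcases le_or_gt s 0 with hs | hs
      · simp [slope, max_eq_right hs]
      · rw [show slope (fun s : ℝ => (max s 0)^2) 0 s = s by simp [slope, max_eq_left hs.le, sq, div_eq_iff hs.ne', inv_mul_cancel_left₀ hs.ne']]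
        simp [abs_of_pos hs]
    have := squeeze_zero_norm' hb
      (by simpa using (continuous_abs.tendsto (0:ℝ)).mono_left nhdsWithin_le_nhds)
    simpa using this
  · have he : (fun s : ℝ => (max s 0)^2) =ᶠ[nhds t] (fun s => s^2) := by
      filter_upwards [eventually_gt_nhds h] with s hs
      simp [max_eq_left hs.le]
    rw [max_eq_left h.le]
    have := (hasDerivAt_pow 2 t).congr_of_eventuallyEq he
    simpa [mul_comm] using this

lemma bump (L : ℝ) (hL : 0 < L) (f : ℝ → ℝ) (hf : ContinuousOn f (Icc (0:ℝ) L))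
    (ε : ℝ) (hε : 0 < ε) :
    ∃ φ φ' : ℝ → ℝ, (∀ x, HasDerivAt φ (φ' x) x) ∧ Continuous φ' ∧
      (∫ x in (0:ℝ)..L, (φ x)^2) = 1 ∧
      (∫ x in (0:ℝ)..L, f x * (φ x)^2) ≤ sInf (f '' Icc (0:ℝ) L) + ε := by
  obtain ⟨x₀, hx₀, hmin⟩ := isCompact_Icc.exists_isMinOn (nonempty_Icc.2 hL.le) hf
  have hm : sInf (f '' Icc (0:ℝ) L) = f x₀ := by
    refine IsLeast.csInf_eq ⟨mem_image_of_mem f hx₀, ?_⟩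
    rintro _ ⟨x, hx, rfl⟩; exact hmin hx
  obtain ⟨δ, hδ, hδf⟩ := Metric.continuousWithinAt_iff.1 (hf x₀ hx₀) ε hε
  set a := max 0 (x₀ - δ/2) with ha
  set b := min L (x₀ + δ/2) with hb
  have h0a : (0:ℝ) ≤ a := le_max_left _ _
  have hbL : b ≤ L := min_le_left _ _
  have hax : a ≤ x₀ := max_le hx₀.1 (by linarith)
  have hxb : x₀ ≤ b := le_min hx₀.2 (by linarith)
  have hab : a < b := by
    have h1 : a < x₀ + δ/2 := lt_of_le_of_lt hax (by linarith)
    have h2 : a < L := by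
      rcases max_cases 0 (x₀ - δ/2) with ⟨h, _⟩ | ⟨h, _⟩
      · rw [ha, h]; exact hL
      · rw [ha, h]; linarith [hx₀.2]
    exact lt_min h2 h1
  have hsub : Icc a b ⊆ Icc 0 L := Icc_subset_Icc h0a hbL
  have hfab : ∀ x ∈ Icc a b, f x ≤ f x₀ + ε := by
    intro x hx
    have h1 : x ∈ Icc (0:ℝ) L := hsub hx
    have h2 : dist x x₀ < δ := by
      rw [Real.dist_eq, abs_sub_lt_iff]
      constructor
      · have := hx.2; have : x ≤ x₀ + δ/2 := le_trans hx.2 (min_le_right _ _); linarith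
      · have : x₀ - δ/2 ≤ x := le_trans (le_max_right _ _) hx.1; linarith
    have := hδf h1 h2
    rw [Real.dist_eq] at this
    have := abs_sub_lt_iff.1 this
    linarith [this.1]
  -- the bump
  set p : ℝ → ℝ := fun x => (x - a) * (b - x) with hp
  set ψ : ℝ → ℝ := fun x => (max (p x) 0)^2 with hψ
  set ψ' : ℝ → ℝ := fun x => 2 * max (p x) 0 * ((b - x) - (x - a)) with hψ'
  have hpd : ∀ x, HasDerivAt p ((b - x) - (x - a)) x := by
    intro x
    have h1 : HasDerivAt (fun x : ℝ => x - a) 1 x := (hasDerivAt_id x).sub_const a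
    have h2 : HasDerivAt (fun x : ℝ => b - x) (-1) x := (hasDerivAt_id x).const_sub b
    have := h1.mul h2
    exact this.congr_deriv (by ring)
  have hψd : ∀ x, HasDerivAt ψ (ψ' x) x := by
    intro x
    have := (maxsq_deriv (p x)).comp x (hpd x)
    simpa [ψ, ψ', Function.comp_def, mul_assoc] using this
  have hψc : Continuous ψ := by fun_prop
  have hψ'c : Continuous ψ' := by fun_prop
  have hψ0 : ∀ x, x ∉ Icc a b → ψ x = 0 := by
    intro x hx
    have hp0 : p x ≤ 0 := by
      rw [mem_Icc, not_and_or] at hx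
      rcases hx with h | h
      · push_neg at h
        apply mul_nonpos_of_nonpos_of_nonneg <;> nlinarith
      · push_neg at h
        apply mul_nonpos_of_nonneg_of_nonpos <;> nlinarith
    simp [ψ, max_eq_right hp0]
  have hψnn : ∀ x, 0 ≤ ψ x := fun x => sq_nonneg _
  set N := ∫ x in (0:ℝ)..L, (ψ x)^2 with hN
  have hNpos : 0 < N := by
    have hint : ∀ u v : ℝ, IntervalIntegrable (fun x => (ψ x)^2) MeasureTheory.volume u v :=
      fun u v => ((hψc.pow 2)).intervalIntegrable u v
    have e1 : (∫ x in (0:ℝ)..a, (ψ x)^2) + (∫ x in a..L, (ψ x)^2) = N :=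
      integral_add_adjacent_intervals (hint 0 a) (hint a L)
    have e2 : (∫ x in a..b, (ψ x)^2) + (∫ x in b..L, (ψ x)^2) = ∫ x in a..L, (ψ x)^2 :=
      integral_add_adjacent_intervals (hint a b) (hint b L)
    have n1 : 0 ≤ ∫ x in (0:ℝ)..a, (ψ x)^2 :=
      integral_nonneg h0a (fun x _ => sq_nonneg _)
    have n2 : 0 ≤ ∫ x in b..L, (ψ x)^2 :=
      integral_nonneg hbL (fun x _ => sq_nonneg _)
    have npos : 0 < ∫ x in a..b, (ψ x)^2 := by
      apply intervalIntegral_pos_of_pos_on (hint a b) _ hab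
      intro x hx
      have hpx : 0 < p x := mul_pos (by linarith [hx.1]) (by linarith [hx.2])
      have : 0 < ψ x := by
        rw [hψ]; positivity
      positivity
    linarith
  have hNs : Real.sqrt N > 0 := Real.sqrt_pos.2 hNpos
  refine ⟨fun x => ψ x / Real.sqrt N, fun x => ψ' x / Real.sqrt N, ?_, ?_, ?_, ?_⟩
  · exact fun x => (hψd x).div_const _
  · fun_prop
  · have : ∀ x, (ψ x / Real.sqrt N)^2 = (ψ x)^2 / N := by
      intro x; rw [div_pow, Real.sq_sqrt hNpos.le]
    simp_rw [this]
    rw [integral_div, ← hN, div_self hNpos.ne']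
  · rw [hm]
    have hle : (∫ x in (0:ℝ)..L, f x * (ψ x / Real.sqrt N)^2)
        ≤ ∫ x in (0:ℝ)..L, (f x₀ + ε) * (ψ x / Real.sqrt N)^2 := by
      apply integral_mono_on hL.le
      · apply ContinuousOn.intervalIntegrable
        rw [uIcc_of_le hL.le]
        exact hf.mul (((hψc.div_const _).pow 2).continuousOn)
      · apply ContinuousOn.intervalIntegrable
        rw [uIcc_of_le hL.le]
        exact continuousOn_const.mul (((hψc.div_const _).pow 2).continuousOn)
      · intro x hx
        by_cases hxab : x ∈ Icc a b
        · exact mul_le_mul_of_nonneg_right (hfab x hxab) (sq_nonneg _)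
        · rw [hψ0 x hxab]; simp
    calc (∫ x in (0:ℝ)..L, f x * (ψ x / Real.sqrt N)^2)
        ≤ ∫ x in (0:ℝ)..L, (f x₀ + ε) * (ψ x / Real.sqrt N)^2 := hle
      _ = (f x₀ + ε) * ∫ x in (0:ℝ)..L, (ψ x / Real.sqrt N)^2 := integral_const_mul _ _
      _ = f x₀ + ε := by
          have : ∀ x, (ψ x / Real.sqrt N)^2 = (ψ x)^2 / N := by
            intro x; rw [div_pow, Real.sq_sqrt hNpos.le]
          simp_rw [this]
          rw [integral_div, ← hN, div_self hNpos.ne', mul_one]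

noncomputable def principalEigenvalue (L D : ℝ) (f : ℝ → ℝ) : ℝ :=
  sInf { r : ℝ | ∃ φ φ' : ℝ → ℝ,
    (∀ x ∈ Set.Icc (0:ℝ) L, HasDerivWithinAt φ (φ' x) (Set.Icc (0:ℝ) L) x) ∧
    ContinuousOn φ' (Set.Icc (0:ℝ) L) ∧
    (∫ x in (0:ℝ)..L, (φ x) ^ 2) = 1 ∧
    r = ∫ x in (0:ℝ)..L, (D * (φ' x) ^ 2 + f x * (φ x) ^ 2) }

theorem stmt_13 (L : ℝ) (hL : 0 < L) (f : ℝ → ℝ)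
    (hf : ContinuousOn f (Set.Icc (0:ℝ) L)) :
    Filter.Tendsto (fun D => principalEigenvalue L D f)
      (nhdsWithin 0 (Set.Ioi (0:ℝ))) (nhds (sInf (f '' Set.Icc (0:ℝ) L))) := by
  set m := sInf (f '' Set.Icc (0:ℝ) L) with hm
  have hbdd : BddBelow (f '' Icc (0:ℝ) L) :=
    (isCompact_Icc.image_of_continuousOn hf).bddBelow
  have hmf : ∀ x ∈ Icc (0:ℝ) L, m ≤ f x := fun x hx =>
    csInf_le hbdd (mem_image_of_mem f hx)
  -- lower bound for all members of the Rayleigh set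
  have hlow : ∀ D : ℝ, 0 ≤ D → ∀ r ∈ { r : ℝ | ∃ φ φ' : ℝ → ℝ,
      (∀ x ∈ Set.Icc (0:ℝ) L, HasDerivWithinAt φ (φ' x) (Set.Icc (0:ℝ) L) x) ∧
      ContinuousOn φ' (Set.Icc (0:ℝ) L) ∧
      (∫ x in (0:ℝ)..L, (φ x) ^ 2) = 1 ∧
      r = ∫ x in (0:ℝ)..L, (D * (φ' x) ^ 2 + f x * (φ x) ^ 2) }, m ≤ r := by
    rintro D hD r ⟨φ, φ', hd, hc, hnorm, rfl⟩
    have hφc : ContinuousOn φ (Icc (0:ℝ) L) := fun x hx => (hd x hx).continuousWithinAt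
    have h1 : (∫ x in (0:ℝ)..L, m * (φ x)^2) ≤
        ∫ x in (0:ℝ)..L, (D * (φ' x) ^ 2 + f x * (φ x) ^ 2) := by
      apply integral_mono_on hL.le
      · apply ContinuousOn.intervalIntegrable
        rw [uIcc_of_le hL.le]
        exact continuousOn_const.mul (hφc.pow 2)
      · apply ContinuousOn.intervalIntegrable
        rw [uIcc_of_le hL.le]
        exact (continuousOn_const.mul (hc.pow 2)).add (hf.mul (hφc.pow 2))
      · intro x hx
        have h2 : 0 ≤ D * (φ' x)^2 := mul_nonneg hD (sq_nonneg _)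
        have h3 : m * (φ x)^2 ≤ f x * (φ x)^2 :=
          mul_le_mul_of_nonneg_right (hmf x hx) (sq_nonneg _)
        linarith
    calc m = m * ∫ x in (0:ℝ)..L, (φ x)^2 := by rw [hnorm, mul_one]
      _ = ∫ x in (0:ℝ)..L, m * (φ x)^2 := (integral_const_mul _ _).symm
      _ ≤ _ := h1
  rw [Metric.tendsto_nhds]
  intro ε hε
  obtain ⟨φ, φ', hd, hc, hnorm, hbound⟩ := bump L hL f hf (ε/2) (half_pos hε)
  have hφc : Continuous φ := continuous_iff_continuousAt.2 fun x => (hd x).continuousAt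
  set C := ∫ x in (0:ℝ)..L, (φ' x)^2 with hC
  have hC0 : 0 ≤ C := integral_nonneg hL.le (fun x _ => sq_nonneg _)
  have hDpos : 0 < ε/(2*(C+1)) := by positivity
  filter_upwards [Ioo_mem_nhdsGT_of_mem (Set.left_mem_Ico.2 hDpos)] with D hD
  have hmem : (∫ x in (0:ℝ)..L, (D * (φ' x)^2 + f x * (φ x)^2)) ∈ { r : ℝ | ∃ φ φ' : ℝ → ℝ,
      (∀ x ∈ Set.Icc (0:ℝ) L, HasDerivWithinAt φ (φ' x) (Set.Icc (0:ℝ) L) x) ∧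
      ContinuousOn φ' (Set.Icc (0:ℝ) L) ∧
      (∫ x in (0:ℝ)..L, (φ x) ^ 2) = 1 ∧
      r = ∫ x in (0:ℝ)..L, (D * (φ' x) ^ 2 + f x * (φ x) ^ 2) } :=
    ⟨φ, φ', fun x hx => (hd x).hasDerivWithinAt, hc.continuousOn, hnorm, rfl⟩
  have hsplit : (∫ x in (0:ℝ)..L, (D * (φ' x)^2 + f x * (φ x)^2))
      = D * C + ∫ x in (0:ℝ)..L, f x * (φ x)^2 := by
    rw [integral_add (f := fun x => D * φ' x ^ 2) ((continuous_const.mul (hc.pow 2)).intervalIntegrable _ _)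
      (by apply ContinuousOn.intervalIntegrable
          rw [uIcc_of_le hL.le]
          exact hf.mul ((hφc.pow 2).continuousOn)),
      integral_const_mul]
  have hub : principalEigenvalue L D f ≤ D * C + ∫ x in (0:ℝ)..L, f x * (φ x)^2 := by
    rw [principalEigenvalue, ← hsplit]
    exact csInf_le ⟨m, hlow D hD.1.le⟩ hmem
  have hlb : m ≤ principalEigenvalue L D f := le_csInf ⟨_, hmem⟩ (hlow D hD.1.le)
  have hDC : D * C < ε/2 := by
    have h := (lt_div_iff₀ (by positivity : (0:ℝ) < 2*(C+1))).1 hD.2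
    nlinarith [hD.1, hC0]
  rw [Real.dist_eq, abs_sub_lt_iff]
  constructor <;> [skip; linarith]
  have : principalEigenvalue L D f ≤ D * C + (m + ε/2) := le_trans hub (by linarith)
  linarith
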